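/- Let H be a complex inner product space (inner product ⟨·,·⟩ antilinear in the first and linear in the second argument), D ⊆ H a subspace, and a, b, a†, b† : H → H linear maps each mapping D into D, satisfying ⟨a† f, g⟩ = ⟨f, a g⟩ and ⟨b† f, g⟩ = ⟨f, b g⟩ for all f, g ∈ D, and a(b f) − b(a f) = f for all f ∈ D. Suppose φ₀, Ψ₀ ∈ D are nonzero with a φ₀ = 0, b† Ψ₀ = 0 and ⟨φ₀, Ψ₀⟩ = 1. Define φₙ = (1/√(n!)) bⁿ φ₀ and Ψₙ = (1/√(n!)) (a†)ⁿ Ψ₀. Then ⟨φₙ, Ψₘ⟩ = δ_{n,m} for all n, m ≥ 0. -/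

import Mathlib

open scoped InnerProductSpace

/-- biorthonormality of the pseudo-bosonic families
`φₙ = (1/√(n!)) bⁿ φ₀` and `Ψₙ = (1/√(n!)) (a†)ⁿ Ψ₀`. -/
theorem stmt1 (H : Type*) [NormedAddCommGroup H] [InnerProductSpace ℂ H]
    (D : Submodule ℂ H) (a b ad bd : H →ₗ[ℂ] H)
    (haD : ∀ f ∈ D, a f ∈ D) (hbD : ∀ f ∈ D, b f ∈ D)
    (hadD : ∀ f ∈ D, ad f ∈ D) (hbdD : ∀ f ∈ D, bd f ∈ D)
    (hadj_a : ∀ f ∈ D, ∀ g ∈ D, ⟪ad f, g⟫_ℂ = ⟪f, a g⟫_ℂ)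
    (hadj_b : ∀ f ∈ D, ∀ g ∈ D, ⟪bd f, g⟫_ℂ = ⟪f, b g⟫_ℂ)
    (hcomm : ∀ f ∈ D, a (b f) - b (a f) = f)
    (φ₀ Ψ₀ : H) (hφ₀D : φ₀ ∈ D) (hΨ₀D : Ψ₀ ∈ D)
    (hφ₀ne : φ₀ ≠ 0) (hΨ₀ne : Ψ₀ ≠ 0)
    (haφ₀ : a φ₀ = 0) (hbdΨ₀ : bd Ψ₀ = 0)
    (hnorm : ⟪φ₀, Ψ₀⟫_ℂ = 1)
    (φ Ψ : ℕ → H)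
    (hφ : ∀ n : ℕ, φ n = ((Real.sqrt n.factorial : ℂ))⁻¹ • ((b ^ n) φ₀))
    (hΨ : ∀ n : ℕ, Ψ n = ((Real.sqrt n.factorial : ℂ))⁻¹ • ((ad ^ n) Ψ₀)) :
    ∀ n m : ℕ, ⟪φ n, Ψ m⟫_ℂ = if n = m then 1 else 0 := by
  -- membership lemmas
  have hbnD : ∀ n : ℕ, (b ^ n) φ₀ ∈ D := by
    intro n
    induction n with
    | zero => simpa using hφ₀D
    | succ k ih =>
      rw [pow_succ']
      exact hbD _ ih
  have hadnD : ∀ n : ℕ, (ad ^ n) Ψ₀ ∈ D := by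
    intro n
    induction n with
    | zero => simpa using hΨ₀D
    | succ k ih =>
      rw [pow_succ']
      exact hadD _ ih
  -- a (b^(n+1) φ₀) = (n+1) • b^n φ₀
  have hab : ∀ n : ℕ, a ((b ^ (n + 1)) φ₀) = ((n : ℂ) + 1) • (b ^ n) φ₀ := by
    intro n
    induction n with
    | zero =>
      have h := hcomm φ₀ hφ₀D
      have h2 : a (b φ₀) = φ₀ + b (a φ₀) := eq_add_of_sub_eq h
      simp only [zero_add, pow_one, pow_zero, Module.End.one_apply]
      rw [h2, haφ₀]
      simp
    | succ k ih =>
      have hmem := hbnD (k + 1)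
      have h := hcomm _ hmem
      have h2 : a (b ((b ^ (k+1)) φ₀)) = (b ^ (k+1)) φ₀ + b (a ((b ^ (k+1)) φ₀)) :=
        eq_add_of_sub_eq h
      have h3 : (b ^ (k + 2)) φ₀ = b ((b ^ (k+1)) φ₀) := by
        rw [pow_succ']; rfl
      rw [h3, h2, ih, map_smul]
      have h4 : (b ^ (k + 1)) φ₀ = b ((b ^ k) φ₀) := by
        rw [pow_succ']; rfl
      rw [h4]
      push_cast
      module
  -- the key inner products
  have key : ∀ m n : ℕ, ⟪(b ^ n) φ₀, (ad ^ m) Ψ₀⟫_ℂ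
      = if n = m then (n.factorial : ℂ) else 0 := by
    intro m
    induction m with
    | zero =>
      intro n
      match n with
      | 0 => simpa using hnorm
      | (k+1) =>
        simp only [pow_zero, Module.End.one_apply]
        have h3 : (b ^ (k + 1)) φ₀ = b ((b ^ k) φ₀) := by
          rw [pow_succ']; rfl
        rw [h3]
        have : ⟪b ((b ^ k) φ₀), Ψ₀⟫_ℂ = (starRingEnd ℂ) ⟪Ψ₀, b ((b ^ k) φ₀)⟫_ℂ := by
          rw [inner_conj_symm]
        rw [this, ← hadj_b Ψ₀ hΨ₀D _ (hbnD k), hbdΨ₀]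
        simp
    | succ m ih =>
      intro n
      have step : ⟪(b ^ n) φ₀, (ad ^ (m+1)) Ψ₀⟫_ℂ = ⟪a ((b ^ n) φ₀), (ad ^ m) Ψ₀⟫_ℂ := by
        have h3 : (ad ^ (m + 1)) Ψ₀ = ad ((ad ^ m) Ψ₀) := by
          rw [pow_succ']; rfl
        rw [h3]
        calc ⟪(b ^ n) φ₀, ad ((ad ^ m) Ψ₀)⟫_ℂ
            = (starRingEnd ℂ) ⟪ad ((ad ^ m) Ψ₀), (b ^ n) φ₀⟫_ℂ := by rw [inner_conj_symm]
          _ = (starRingEnd ℂ) ⟪(ad ^ m) Ψ₀, a ((b ^ n) φ₀)⟫_ℂ := by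
              rw [hadj_a _ (hadnD m) _ (hbnD n)]
          _ = ⟪a ((b ^ n) φ₀), (ad ^ m) Ψ₀⟫_ℂ := by rw [inner_conj_symm]
      rw [step]
      match n with
      | 0 =>
        simp only [pow_zero, Module.End.one_apply, haφ₀]
        simp
      | (k+1) =>
        rw [hab k, inner_smul_left, ih k]
        by_cases h : k = m
        · subst h
          simp only [if_pos rfl, Nat.factorial_succ, map_add, map_one, Complex.conj_natCast]
          push_cast
          ring
        · have : ¬ (k + 1 = m + 1) := by omega
          simp [h, this]
  intro n m
  rw [hφ, hΨ, inner_smul_left, inner_smul_right, key m n]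
  by_cases h : n = m
  · subst h
    simp only [if_pos rfl]
    have hpos : (0:ℝ) < n.factorial := by exact_mod_cast n.factorial_pos
    have hs : Real.sqrt n.factorial * Real.sqrt n.factorial = n.factorial :=
      Real.mul_self_sqrt hpos.le
    have hne : (Real.sqrt n.factorial : ℂ) ≠ 0 := by
      norm_cast
      exact (Real.sqrt_pos.mpr hpos).ne'
    rw [map_inv₀, Complex.conj_ofReal]
    field_simp
    norm_cast
    simp only [↓reduceIte, Nat.cast_one, mul_one, sq]
    exact hs.symm
  · simp [h]
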